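/- For every n ≥ 1, let P_n be the path graph on vertices 1, 2, …, n with edges {i, i+1} for 1 ≤ i < n (the unlabeled Coxeter graph of the Coxeter groups A_n and B_n). Then β(P_n) = f(n−1), where f is the Fibonacci sequence. -/

import Mathlib

/-- One commutation move: swap two consecutive letters that are non-adjacent in `G`. -/
def CommStep {V : Type*} (G : SimpleGraph V) (w w' : List V) : Prop :=
  ∃ (a b : V) (u v : List V),
    ¬ G.Adj a b ∧ w = u ++ a :: b :: v ∧ w' = u ++ b :: a :: v

/-- Commutation equivalence of words: the equivalence relation generated by commutation moves. -/
def commSetoid {V : Type*} (G : SimpleGraph V) : Setoid (List V) :=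
  ⟨Relation.EqvGen (CommStep G), Relation.EqvGen.is_equivalence _⟩

/-- `bWords G k` = number of commutation classes of injective words of length `k` on `G`. -/
noncomputable def bWords {V : Type*} (G : SimpleGraph V) (k : ℕ) : ℕ :=
  Nat.card (Quotient (Setoid.comap
    (fun w : {w : List V // w.Nodup ∧ w.length = k} => w.1) (commSetoid G)))

/-- The boolean number `β(G) = (-1)^{|V|} ∑_{k=0}^{|V|} (-1)^k b_k(G)`. -/
noncomputable def booleanNumber {V : Type*} (G : SimpleGraph V) [Fintype V] : ℤ :=
  (-1) ^ (Fintype.card V) *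
    ∑ k ∈ Finset.range (Fintype.card V + 1), (-1) ^ k * (bWords G k : ℤ)

/-- The path graph on vertices `0, 1, …, n-1`, with edges `{i, i+1}`. -/
def pathG (n : ℕ) : SimpleGraph (Fin n) where
  Adj i j := i.1 + 1 = j.1 ∨ j.1 + 1 = i.1
  symm := ⟨by intro i j h; tauto⟩
  loopless := ⟨by intro i h; omega⟩


set_option linter.unusedSectionVars false
set_option linter.unnecessarySimpa false
open List
open List
set_option linter.unusedSectionVars false

section general
variable {V : Type*} [DecidableEq V] {G : SimpleGraph V}

lemma CommStep.symm' {w w' : List V} (h : CommStep G w w') : CommStep G w' w := by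
  obtain ⟨a, b, u, v, hab, h1, h2⟩ := h
  exact ⟨b, a, u, v, fun h => hab h.symm, h2, h1⟩

lemma CommStep.perm {w w' : List V} (h : CommStep G w w') : w.Perm w' := by
  obtain ⟨a, b, u, v, _, rfl, rfl⟩ := h
  exact (List.perm_append_left_iff u).mpr (List.Perm.swap b a v)

lemma eqvGen_perm {w w' : List V} (h : Relation.EqvGen (CommStep G) w w') : w.Perm w' := by
  induction h with
  | rel _ _ h => exact h.perm
  | refl => exact List.Perm.refl _
  | symm _ _ _ ih => exact ih.symm
  | trans _ _ _ _ _ ih1 ih2 => exact ih1.trans ih2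

lemma pair_sublist_total {w : List V} {x y : V} (hx : x ∈ w) (hy : y ∈ w) (hxy : x ≠ y) :
    [x, y] <+ w ∨ [y, x] <+ w := by
  induction w with
  | nil => simp at hx
  | cons c t ih =>
    rcases List.mem_cons.mp hx with rfl | hx'
    · left
      have hy' : y ∈ t := (List.mem_cons.mp hy).resolve_left (fun h => hxy h.symm)
      exact (List.singleton_sublist.mpr hy').cons₂ x
    · rcases List.mem_cons.mp hy with rfl | hy'
      · right
        exact (List.singleton_sublist.mpr hx').cons₂ y
      · rcases ih hx' hy' with h | h
        · exact Or.inl (h.cons c)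
        · exact Or.inr (h.cons c)

lemma pair_sublist_asymm {w : List V} (hw : w.Nodup) {x y : V} (hxy : x ≠ y)
    (h1 : [x, y] <+ w) (h2 : [y, x] <+ w) : False := by
  induction w with
  | nil => simp at h1
  | cons c t ih =>
    have hct : c ∉ t := (List.nodup_cons.mp hw).1
    have ht : t.Nodup := (List.nodup_cons.mp hw).2
    rcases List.sublist_cons_iff.mp h1 with h1' | ⟨r, hr, hrt⟩
    · rcases List.sublist_cons_iff.mp h2 with h2' | ⟨s, hs, hst⟩
      · exact ih ht h1' h2'
      · obtain ⟨rfl, rfl⟩ := List.cons_eq_cons.mp hs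
        exact hct (h1'.subset (by simp))
    · obtain ⟨rfl, rfl⟩ := List.cons_eq_cons.mp hr
      rcases List.sublist_cons_iff.mp h2 with h2' | ⟨s, hs, hst⟩
      · exact hct (h2'.subset (by simp))
      · obtain ⟨rfl, rfl⟩ := List.cons_eq_cons.mp hs
        exact hxy rfl

lemma mem_of_pair_sublist {w : List V} {x y : V} (h : [x, y] <+ w) : x ∈ w ∧ y ∈ w :=
  ⟨h.subset (by simp), h.subset (by simp)⟩

lemma pair_sublist_iff_not {w : List V} (hw : w.Nodup) {x y : V} (hxy : x ≠ y)
    (hx : x ∈ w) (hy : y ∈ w) : [x, y] <+ w ↔ ¬ [y, x] <+ w := by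
  constructor
  · intro h1 h2
    exact pair_sublist_asymm hw hxy h1 h2
  · intro h
    exact (pair_sublist_total hx hy hxy).resolve_right h

lemma commStep_pres {w w' : List V} (hw : w.Nodup) (h : CommStep G w w') {x y : V}
    (hadj : G.Adj x y) (hs : [x, y] <+ w) : [x, y] <+ w' := by
  obtain ⟨a, b, u, v, hab, rfl, rfl⟩ := h
  have hxy : x ≠ y := hadj.ne
  have hdis := (List.nodup_append'.mp hw).2.2
  have hnd2 := (List.nodup_append'.mp hw).2.1
  have hab' : a ≠ b := by
    intro h; subst h
    exact (List.nodup_cons.mp hnd2).1 List.mem_cons_self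
  by_cases hb : b ∈ [x, y]
  · -- then a ∉ [x, y]
    have ha : a ∉ [x, y] := by
      intro ha
      simp only [List.mem_cons, List.mem_singleton, List.not_mem_nil, or_false] at ha hb
      rcases ha with ha | ha <;> rcases hb with hb | hb
      · exact hab' (ha.trans hb.symm)
      · exact hab (ha ▸ hb ▸ hadj)
      · exact hab (ha ▸ hb ▸ hadj.symm)
      · exact hab' (ha.trans hb.symm)
    have h1 := hs.erase a
    rw [List.erase_of_not_mem ha] at h1
    have hau : a ∉ u := fun hau => hdis hau (by simp)
    rw [List.erase_append_right _ hau, List.erase_cons_head] at h1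
    refine h1.trans (List.Sublist.append (List.Sublist.refl u) ?_)
    exact (List.sublist_cons_self a v).cons₂ b
  · have h1 := hs.erase b
    rw [List.erase_of_not_mem hb] at h1
    have hbu : b ∉ u := fun hbu => hdis hbu (by simp)
    rw [List.erase_append_right _ hbu, List.erase_cons_tail, List.erase_cons_head] at h1
    · refine h1.trans (List.Sublist.append (List.Sublist.refl u) ?_)
      exact (List.Sublist.refl (a :: v)).cons b
    · simp [hab']

lemma eqvGen_pres {w w' : List V} (h : Relation.EqvGen (CommStep G) w w') (hw : w.Nodup)
    {x y : V} (hadj : G.Adj x y) : ([x, y] <+ w ↔ [x, y] <+ w') := by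
  induction h with
  | rel _ _ h =>
    exact ⟨fun hs => commStep_pres hw h hadj hs,
      fun hs => commStep_pres (h.perm.nodup_iff.mp hw) h.symm' hadj hs⟩
  | refl => rfl
  | symm a b hab ih =>
    exact (ih ((eqvGen_perm hab).symm.nodup_iff.mp hw)).symm
  | trans a b c hab _ ih1 ih2 =>
    exact (ih1 hw).trans (ih2 ((eqvGen_perm hab).nodup_iff.mp hw))

lemma CommStep.cons {w w' : List V} (c : V) (h : CommStep G w w') :
    CommStep G (c :: w) (c :: w') := by
  obtain ⟨a, b, u, v, hab, rfl, rfl⟩ := h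
  exact ⟨a, b, c :: u, v, hab, rfl, rfl⟩

lemma eqvGen_cons {w w' : List V} (c : V) (h : Relation.EqvGen (CommStep G) w w') :
    Relation.EqvGen (CommStep G) (c :: w) (c :: w') := by
  induction h with
  | rel a b h => exact Relation.EqvGen.rel _ _ (h.cons c)
  | refl a => exact Relation.EqvGen.refl _
  | symm a b _ ih => exact ih.symm _ _
  | trans a b c' _ _ ih1 ih2 => exact ih1.trans _ _ _ ih2

lemma eqvGen_move {x : V} {u v : List V} (h : ∀ y ∈ u, ¬ G.Adj y x) :
    Relation.EqvGen (CommStep G) (u ++ x :: v) (x :: (u ++ v)) := by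
  induction u with
  | nil => exact Relation.EqvGen.refl _
  | cons y u' ih =>
    have h1 : Relation.EqvGen (CommStep G) (y :: (u' ++ x :: v)) (y :: x :: (u' ++ v)) :=
      eqvGen_cons y (ih (fun z hz => h z (List.mem_cons_of_mem y hz)))
    refine h1.trans _ _ _ (Relation.EqvGen.rel _ _ ?_)
    exact ⟨y, x, [], u' ++ v, h y List.mem_cons_self, rfl, rfl⟩

/-- Key lemma: nodup words with the same letters and same relative order of all
`G`-adjacent pairs are commutation equivalent. -/
lemma eqvGen_of_invariants : ∀ (w' w : List V), w.Nodup → w.Perm w' →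
    (∀ x y : V, G.Adj x y → ([x, y] <+ w ↔ [x, y] <+ w')) →
    Relation.EqvGen (CommStep G) w w' := by
  intro w'
  induction w' with
  | nil =>
    intro w _ hp _
    rw [List.perm_nil.mp hp]
    exact Relation.EqvGen.refl _
  | cons x t' ih =>
    intro w hw hp hor
    have hw' : (x :: t').Nodup := hp.nodup_iff.mp hw
    have hxt' : x ∉ t' := (List.nodup_cons.mp hw').1
    have hxw : x ∈ w := hp.mem_iff.mpr List.mem_cons_self
    obtain ⟨u, v, rfl⟩ := List.append_of_mem hxw
    have hkey : ∀ y ∈ u, ¬ G.Adj y x := by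
      intro y hy hadj
      have h1 : [y, x] <+ u ++ x :: v :=
        List.Sublist.append (List.singleton_sublist.mpr hy)
          ((List.Sublist.refl [x]).trans (by simpa using List.sublist_cons_self x v |>.cons₂ x))
      have h2 : [y, x] <+ x :: t' := (hor y x hadj).mp h1
      rcases List.sublist_cons_iff.mp h2 with h3 | ⟨r, hr, hrt⟩
      · exact hxt' (h3.subset (by simp))
      · obtain ⟨rfl, rfl⟩ := List.cons_eq_cons.mp hr
        exact hxt' (hrt.subset (by simp))
    have hmv : Relation.EqvGen (CommStep G) (u ++ x :: v) (x :: (u ++ v)) := eqvGen_move hkey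
    set t := u ++ v with ht
    have hxtnd : (x :: t).Nodup := (eqvGen_perm hmv).nodup_iff.mp hw
    have hxt : x ∉ t := (List.nodup_cons.mp hxtnd).1
    have htnd : t.Nodup := (List.nodup_cons.mp hxtnd).2
    have htp : t.Perm t' := by
      have : (x :: t).Perm (x :: t') := ((eqvGen_perm hmv).symm.trans hp)
      exact (List.perm_cons x).mp this
    have hor' : ∀ a b : V, G.Adj a b → ([a, b] <+ t ↔ [a, b] <+ t') := by
      intro a b hadj
      by_cases hxab : x = a ∨ x = b
      · constructor
        · intro hs
          rcases hxab with rfl | rfl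
          · exact absurd (mem_of_pair_sublist hs).1 hxt
          · exact absurd (mem_of_pair_sublist hs).2 hxt
        · intro hs
          rcases hxab with rfl | rfl
          · exact absurd (mem_of_pair_sublist hs).1 hxt'
          · exact absurd (mem_of_pair_sublist hs).2 hxt'
      · push_neg at hxab
        have hxab' : x ∉ [a, b] := by simp only [List.mem_cons, List.not_mem_nil, or_false]; push_neg; exact hxab
        have e1 : [a, b] <+ t ↔ [a, b] <+ x :: t := by
          constructor
          · exact fun hs => hs.trans (List.sublist_cons_self x t)
          · intro hs
            have := hs.erase x
            rwa [List.erase_of_not_mem hxab', List.erase_cons_head] at this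
        have e2 : [a, b] <+ t' ↔ [a, b] <+ x :: t' := by
          constructor
          · exact fun hs => hs.trans (List.sublist_cons_self x t')
          · intro hs
            have := hs.erase x
            rwa [List.erase_of_not_mem hxab', List.erase_cons_head] at this
        rw [e1, e2]
        rw [← eqvGen_pres hmv hw hadj, ← hor a b hadj]
    have hmain : Relation.EqvGen (CommStep G) t t' := ih t htnd htp hor'
    exact hmv.trans _ _ _ (eqvGen_cons x hmain)

end general

namespace PathAux

variable {n : ℕ}

def nxt (i : Fin n) : Fin n := if h : i.1 + 1 < n then ⟨i.1 + 1, h⟩ else i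

lemma nxt_val {i : Fin n} (h : i.1 + 1 < n) : (nxt i).1 = i.1 + 1 := by
  simp [nxt, h]

lemma adj_nxt {i : Fin n} (h : i.1 + 1 < n) : (pathG n).Adj i (nxt i) :=
  Or.inl (by rw [nxt_val h])

def good (S : Finset (Fin n)) (g : Fin n → Bool) : Prop :=
  ∀ i, g i = true → (i.1 + 1 < n ∧ i ∈ S ∧ nxt i ∈ S)

instance (S : Finset (Fin n)) (g : Fin n → Bool) : Decidable (good S g) := by
  unfold good; infer_instance

noncomputable def phi (w : List (Fin n)) : Finset (Fin n) × (Fin n → Bool) :=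
  (w.toFinset, fun i => decide (i.1 + 1 < n) && decide ([i, nxt i] <+ w))

lemma phi_good (w : List (Fin n)) : good (phi w).1 (phi w).2 := by
  intro i hi
  simp only [phi, Bool.and_eq_true, decide_eq_true_eq] at hi
  obtain ⟨h1, h2⟩ := hi
  have := mem_of_pair_sublist h2
  exact ⟨h1, List.mem_toFinset.mpr this.1, List.mem_toFinset.mpr this.2⟩

lemma phi_invariant {w w' : List (Fin n)}
    (h : Relation.EqvGen (CommStep (pathG n)) w w') (hw : w.Nodup) : phi w = phi w' := by
  have hperm := eqvGen_perm h
  refine Prod.ext (by simp only [phi]; exact List.toFinset_eq_of_perm _ _ hperm) ?_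
  funext i
  simp only [phi]
  by_cases hn : i.1 + 1 < n
  · rw [decide_eq_decide.mpr (eqvGen_pres h hw (adj_nxt hn))]
  · simp [hn]

lemma phi_inj {w w' : List (Fin n)} (hw : w.Nodup) (hw' : w'.Nodup)
    (h : phi w = phi w') : Relation.EqvGen (CommStep (pathG n)) w w' := by
  have hfs : w.toFinset = w'.toFinset := congrArg Prod.fst h
  have hg : ∀ i : Fin n, (decide (i.1 + 1 < n) && decide ([i, nxt i] <+ w))
      = (decide (i.1 + 1 < n) && decide ([i, nxt i] <+ w')) := fun i =>
    congrFun (congrArg Prod.snd h) i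
  have hmem : ∀ x : Fin n, x ∈ w ↔ x ∈ w' := by
    intro x
    rw [← List.mem_toFinset, ← List.mem_toFinset, hfs]
  have hperm : w.Perm w' := by
    apply List.perm_of_nodup_nodup_toFinset_eq hw hw' hfs
  refine eqvGen_of_invariants w' w hw hperm ?_
  intro x y hadj
  have hgl : ∀ (i : Fin n), i.1 + 1 < n → ([i, nxt i] <+ w ↔ [i, nxt i] <+ w') := by
    intro i hn
    have h2 := hg i
    rw [decide_eq_true hn] at h2
    simp only [Bool.true_and] at h2
    exact decide_eq_decide.mp h2
  rcases hadj with hxy | hyx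
  · -- y = nxt x
    have hn : x.1 + 1 < n := hxy ▸ y.2
    have hy : y = nxt x := Fin.ext (by rw [nxt_val hn, hxy])
    rw [hy]
    exact hgl x hn
  · -- x = nxt y
    have hn : y.1 + 1 < n := hyx ▸ x.2
    have hx : x = nxt y := Fin.ext (by rw [nxt_val hn, hyx])
    have hxyne : x ≠ y := by
      intro hh; rw [hh] at hyx; omega
    by_cases hxw : x ∈ w ∧ y ∈ w
    · rw [pair_sublist_iff_not hw hxyne hxw.1 hxw.2,
        pair_sublist_iff_not hw' hxyne ((hmem x).mp hxw.1) ((hmem y).mp hxw.2)]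
      rw [hx]
      exact not_congr (hgl y hn)
    · constructor
      · intro hs; exact absurd (mem_of_pair_sublist hs) hxw
      · intro hs
        have := mem_of_pair_sublist hs
        exact absurd ⟨(hmem x).mpr this.1, (hmem y).mpr this.2⟩ hxw

lemma exists_word : ∀ (k : ℕ) (S : Finset (Fin n)) (g : Fin n → Bool), S.card = k →
    good S g → ∃ w : List (Fin n), w.Nodup ∧ phi w = (S, g) := by
  intro k
  induction k with
  | zero =>
    intro S g hcard hgood
    rw [Finset.card_eq_zero] at hcard
    subst hcard
    refine ⟨[], List.nodup_nil, ?_⟩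
    refine Prod.ext (by simp [phi]) ?_
    funext i
    have : g i = false := by
      cases hgi : g i
      · rfl
      · exact absurd (hgood i hgi).2.1 (by simp)
    simp [phi, this]
  | succ k ih =>
    intro S g hcard hgood
    have hne : S.Nonempty := Finset.card_pos.mp (by omega)
    set m := S.max' hne with hm
    have hmS : m ∈ S := S.max'_mem hne
    have hmax : ∀ a ∈ S, a ≤ m := fun a ha => S.le_max' a ha
    have hnxtm : m.1 + 1 < n → nxt m ∉ S := by
      intro h hmem
      have h2 := Fin.le_def.mp (hmax _ hmem)
      rw [nxt_val h] at h2
      omega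
    have hgm : g m = false := by
      cases hgi : g m
      · rfl
      · obtain ⟨h1, _, h3⟩ := hgood m hgi
        exact absurd h3 (hnxtm h1)
    set S' := S.erase m with hS'
    set g' : Fin n → Bool := fun i => if nxt i = m then false else g i with hg'
    have hcard' : S'.card = k := by
      rw [hS', Finset.card_erase_of_mem hmS, hcard]
      omega
    have hgood' : good S' g' := by
      intro i hi
      rw [hg'] at hi
      simp only at hi
      by_cases hni : nxt i = m
      · rw [if_pos hni] at hi; exact absurd hi (by simp)
      · rw [if_neg hni] at hi
        obtain ⟨h1, h2, h3⟩ := hgood i hi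
        have him : i ≠ m := by
          intro hh; subst hh; rw [hgm] at hi; exact absurd hi (by simp)
        exact ⟨h1, Finset.mem_erase.mpr ⟨him, h2⟩, Finset.mem_erase.mpr ⟨hni, h3⟩⟩
    obtain ⟨w', hnd', hphi'⟩ := ih S' g' hcard' hgood'
    have hwfs : w'.toFinset = S' := congrArg Prod.fst hphi'
    have hwg : ∀ i : Fin n, (decide (i.1 + 1 < n) && decide ([i, nxt i] <+ w')) = g' i :=
      fun i => congrFun (congrArg Prod.snd hphi') i
    have hmw' : m ∉ w' := by
      rw [← List.mem_toFinset, hwfs, hS']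
      simp
    set C := ∃ j : Fin n, j.1 + 1 = m.1 ∧ j ∈ S ∧ g j = false with hC
    set w := if C then m :: w' else w' ++ [m] with hwdef
    have hnd : w.Nodup := by
      rw [hwdef]
      split
      · exact List.nodup_cons.mpr ⟨hmw', hnd'⟩
      · rw [List.nodup_append']
        exact ⟨hnd', List.nodup_singleton m, by simpa using hmw'⟩
    have hsub : w' <+ w := by
      rw [hwdef]; split
      · exact List.sublist_cons_self m w'
      · exact List.sublist_append_left w' [m]
    have hmemw : ∀ x, x ∈ w ↔ (x = m ∨ x ∈ w') := by
      intro x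
      rw [hwdef]; split <;> simp [List.mem_append, or_comm]
    have hfsw : w.toFinset = S := by
      ext x
      rw [List.mem_toFinset, hmemw, ← List.mem_toFinset, hwfs, hS']
      constructor
      · rintro (rfl | hx)
        · exact hmS
        · exact Finset.mem_of_mem_erase hx
      · intro hx
        by_cases hxm : x = m
        · exact Or.inl hxm
        · exact Or.inr (Finset.mem_erase.mpr ⟨hxm, hx⟩)
    refine ⟨w, hnd, Prod.ext hfsw ?_⟩
    funext i
    show (decide (i.1 + 1 < n) && decide ([i, nxt i] <+ w)) = g i
    by_cases hn : i.1 + 1 < n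
    · have hnxtval : (nxt i).1 = i.1 + 1 := nxt_val hn
      have hine : i ≠ nxt i := by
        intro hh
        have : i.1 = (nxt i).1 := congrArg Fin.val hh
        omega
      rw [decide_eq_true hn]
      simp only [Bool.true_and]
      by_cases him : i = m
      · -- g m = false, and [m, nxt m] not sublist
        subst him
        rw [hgm]
        simp only [decide_eq_false_iff_not]
        intro hs
        have := (mem_of_pair_sublist hs).2
        rw [hmemw] at this
        rcases this with hh | hh
        · exact hine hh.symm
        · rw [← List.mem_toFinset, hwfs] at hh
          exact hnxtm hn (Finset.mem_of_mem_erase hh)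
      · by_cases hnim : nxt i = m
        · have hvm : i.1 + 1 = m.1 := by rw [← hnxtval, hnim]
          by_cases hiS : i ∈ S
          · cases hgi : g i
            · -- C holds, w = m :: w', so [i, m] not sublist
              have hCtrue : C := ⟨i, hvm, hiS, hgi⟩
              rw [hwdef, if_pos hCtrue]
              simp only [decide_eq_false_iff_not]
              rw [hnim]
              intro hs
              rcases List.sublist_cons_iff.mp hs with hs' | ⟨r, hr, hrt⟩
              · exact hmw' ((mem_of_pair_sublist hs').2)
              · obtain ⟨hh, _⟩ := List.cons_eq_cons.mp hr
                exact him hh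
            · -- C fails, w = w' ++ [m], [i, m] is sublist
              have hCfalse : ¬ C := by
                rintro ⟨j, hj1, hj2, hj3⟩
                have : j = i := Fin.ext (by omega)
                rw [this, hgi] at hj3
                exact absurd hj3 (by simp)
              rw [hwdef, if_neg hCfalse]
              simp only [decide_eq_true_eq]
              rw [hnim]
              have hiw' : i ∈ w' := by
                rw [← List.mem_toFinset, hwfs]
                exact Finset.mem_erase.mpr ⟨him, hiS⟩
              exact List.Sublist.append (List.singleton_sublist.mpr hiw') (List.Sublist.refl [m])
          · -- i ∉ S: g i = false and i ∉ w
            have hgi : g i = false := by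
              cases hgi : g i
              · rfl
              · exact absurd (hgood i hgi).2.1 hiS
            rw [hgi]
            simp only [decide_eq_false_iff_not]
            intro hs
            have := (mem_of_pair_sublist hs).1
            rw [← List.mem_toFinset, hfsw] at this
            exact hiS this
        · -- neither i nor nxt i is m
          have hnotin : m ∉ [i, nxt i] := by
            simp only [List.mem_cons, List.not_mem_nil, or_false]
            push_neg
            exact ⟨fun hh => him hh.symm, fun hh => hnim hh.symm⟩
          have hiff : [i, nxt i] <+ w ↔ [i, nxt i] <+ w' := by
            constructor
            · intro hs
              have := hs.erase m
              rw [List.erase_of_not_mem hnotin] at this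
              have hwe : w.erase m = w' := by
                rw [hwdef]; split
                · exact List.erase_cons_head m w'
                · rw [List.erase_append_right _ hmw']
                  simp
              rwa [hwe] at this
            · exact fun hs => hs.trans hsub
          rw [decide_eq_decide.mpr hiff]
          have h3 := hwg i
          rw [decide_eq_true hn, Bool.true_and] at h3
          rw [h3, hg']
          simp only [if_neg hnim]
    · rw [decide_eq_false hn]
      simp only [Bool.false_and]
      cases hgi : g i
      · rfl
      · exact absurd (hgood i hgi).1 hn

end PathAux

namespace PathAux

variable {n : ℕ}

/-- The finset of "good pairs" (support, orientation data) with support of size `k`. -/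
def Dk (n k : ℕ) : Finset (Finset (Fin n) × (Fin n → Bool)) :=
  Finset.univ.filter (fun p => good p.1 p.2 ∧ p.1.card = k)

lemma bWords_path (n k : ℕ) : bWords (pathG n) k = (Dk n k).card := by
  classical
  set st := Setoid.comap
    (fun w : {w : List (Fin n) // w.Nodup ∧ w.length = k} => w.1) (commSetoid (pathG n)) with hst
  have hF0 : ∀ w : {w : List (Fin n) // w.Nodup ∧ w.length = k}, phi w.1 ∈ Dk n k := by
    intro w
    refine Finset.mem_filter.mpr ⟨Finset.mem_univ _, phi_good w.1, ?_⟩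
    show w.1.toFinset.card = k
    rw [List.toFinset_card_of_nodup w.2.1, w.2.2]
  let F0 : {w : List (Fin n) // w.Nodup ∧ w.length = k} → {p // p ∈ Dk n k} :=
    fun w => ⟨phi w.1, hF0 w⟩
  have hresp : ∀ a b, st.r a b → F0 a = F0 b := by
    intro a b hab
    have hab' : Relation.EqvGen (CommStep (pathG n)) a.1 b.1 := hab
    exact Subtype.ext (phi_invariant hab' a.2.1)
  let F : Quotient st → {p // p ∈ Dk n k} := Quotient.lift F0 hresp
  have hbij : Function.Bijective F := by
    constructor
    · intro a b
      induction a using Quotient.ind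
      induction b using Quotient.ind
      rename_i a b
      intro hab
      have : phi a.1 = phi b.1 := Subtype.ext_iff.mp hab
      refine Quotient.sound ?_
      show Relation.EqvGen (CommStep (pathG n)) a.1 b.1
      exact phi_inj a.2.1 b.2.1 this
    · rintro ⟨p, hp⟩
      have hp' := Finset.mem_filter.mp hp
      obtain ⟨w, hnd, hphi⟩ := exists_word p.1.card p.1 p.2 rfl hp'.2.1
      have hlen : w.length = k := by
        rw [← List.toFinset_card_of_nodup hnd]
        have : (phi w).1 = p.1 := by rw [hphi]
        rw [show w.toFinset = (phi w).1 from rfl, this]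
        exact hp'.2.2
      refine ⟨⟦⟨w, hnd, hlen⟩⟧, ?_⟩
      refine Subtype.ext ?_
      show phi w = p
      rw [hphi]
  rw [bWords]
  rw [Nat.card_eq_of_bijective F hbij, Nat.card_eq_fintype_card, Fintype.card_coe]

/-- Edge positions of a subset `S`: vertices `i` with `i, i+1 ∈ S`. -/
def epos (S : Finset (Fin n)) : Finset (Fin n) :=
  Finset.univ.filter (fun i => i.1 + 1 < n ∧ i ∈ S ∧ nxt i ∈ S)

lemma good_iff (S : Finset (Fin n)) (g : Fin n → Bool) :
    good S g ↔ ∀ i, g i = true → i ∈ epos S := by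
  unfold good epos
  simp [Finset.mem_filter]

lemma count_good (S : Finset (Fin n)) :
    ((Finset.univ : Finset (Fin n → Bool)).filter (fun g => good S g)).card
      = 2 ^ (epos S).card := by
  classical
  rw [← Fintype.card_coe (epos S), show (2 : ℕ) = Fintype.card Bool from rfl,
    ← Fintype.card_fun, ← Fintype.card_subtype]
  refine Fintype.card_congr ?_
  refine
    { toFun := fun g i => g.1 i.1
      invFun := fun h => ⟨fun i => if hi : i ∈ epos S then h ⟨i, hi⟩ else false, ?_⟩
      left_inv := ?_
      right_inv := ?_ }
  · rw [good_iff]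
    intro i hi
    by_cases h' : i ∈ epos S
    · exact h'
    · rw [dif_neg h'] at hi; exact absurd hi (by simp)
  · rintro ⟨g, hg⟩
    refine Subtype.ext (funext fun i => ?_)
    dsimp only
    by_cases hi : i ∈ epos S
    · simp [dif_pos hi]
    · rw [dif_neg hi]
      cases hgi : g i
      · rfl
      · exact absurd ((good_iff S g).mp hg i hgi) hi
  · intro h
    refine funext fun i => ?_
    simp [dif_pos i.2]

/-- Weight of a subset. -/
def wt (S : Finset (Fin n)) : ℤ := (-1) ^ S.card * 2 ^ (epos S).card

lemma boolean_eq_sum (n : ℕ) :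
    booleanNumber (pathG n) = (-1) ^ n * ∑ S : Finset (Fin n), wt S := by
  classical
  rw [booleanNumber, Fintype.card_fin]
  congr 1
  have hDk : ∀ k, ((Dk n k).card : ℤ)
      = ∑ p ∈ Finset.univ.filter (fun p : Finset (Fin n) × (Fin n → Bool) => good p.1 p.2),
          (if p.1.card = k then 1 else 0) := by
    intro k
    rw [Dk, ← Finset.filter_filter, Finset.card_filter]
    push_cast
    rfl
  calc ∑ k ∈ Finset.range (n + 1), (-1 : ℤ) ^ k * (bWords (pathG n) k : ℤ)
      = ∑ k ∈ Finset.range (n + 1),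
          ∑ p ∈ Finset.univ.filter (fun p : Finset (Fin n) × (Fin n → Bool) => good p.1 p.2),
            (if p.1.card = k then (-1 : ℤ) ^ k else 0) := by
        refine Finset.sum_congr rfl fun k _ => ?_
        rw [bWords_path, hDk, Finset.mul_sum]
        refine Finset.sum_congr rfl fun p _ => ?_
        split <;> simp
    _ = ∑ p ∈ Finset.univ.filter (fun p : Finset (Fin n) × (Fin n → Bool) => good p.1 p.2),
          (-1 : ℤ) ^ p.1.card := by
        rw [Finset.sum_comm]
        refine Finset.sum_congr rfl fun p hp => ?_
        have hcard : p.1.card ∈ Finset.range (n + 1) := by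
          rw [Finset.mem_range]
          have := Finset.card_le_univ p.1
          rw [Fintype.card_fin] at this
          omega
        rw [Finset.sum_ite_eq (Finset.range (n + 1)) p.1.card (fun k => (-1 : ℤ) ^ k)]
        rw [if_pos hcard]
    _ = ∑ S : Finset (Fin n), ∑ g : Fin n → Bool,
          (if good S g then (-1 : ℤ) ^ S.card else 0) := by
        rw [Finset.sum_filter, Fintype.sum_prod_type]
    _ = ∑ S : Finset (Fin n), wt S := by
        refine Finset.sum_congr rfl fun S _ => ?_
        rw [← Finset.sum_filter, Finset.sum_const, count_good, wt]
        push_cast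
        ring

end PathAux

namespace PathAux
variable {n : ℕ}
lemma mem_epos {S : Finset (Fin n)} {i : Fin n} :
    i ∈ epos S ↔ i.1 + 1 < n ∧ i ∈ S ∧ nxt i ∈ S := by simp [epos]

lemma mem_map_iff {N : ℕ} {S' : Finset (Fin N)} {i : Fin (N + 1)} :
    i ∈ S'.map Fin.castSuccEmb ↔ ∃ j ∈ S', (j : Fin N).1 = i.1 := by
  rw [Finset.mem_map]
  constructor
  · rintro ⟨j, hj, rfl⟩
    exact ⟨j, hj, rfl⟩
  · rintro ⟨j, hj, hval⟩
    exact ⟨j, hj, Fin.ext hval⟩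

lemma epos_map {N : ℕ} (S' : Finset (Fin N)) :
    epos (S'.map Fin.castSuccEmb) = (epos S').map Fin.castSuccEmb := by
  ext i
  rw [mem_epos, mem_map_iff (S' := S') (i := i), mem_map_iff (S' := S') (i := nxt i),
    mem_map_iff (S' := epos S') (i := i)]
  constructor
  · rintro ⟨h1, ⟨j, hj, hjv⟩, ⟨j', hj', hjv'⟩⟩
    have hnv : (nxt i).1 = i.1 + 1 := nxt_val h1
    have hjN : j.1 + 1 < N := by have := j'.2; omega
    refine ⟨j, mem_epos.mpr ⟨hjN, hj, ?_⟩, hjv⟩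
    have hnvj : (nxt j).1 = j.1 + 1 := nxt_val hjN
    have : nxt j = j' := Fin.ext (by omega)
    rw [this]; exact hj'
  · rintro ⟨j, hjep, hjv⟩
    rw [mem_epos] at hjep
    obtain ⟨hjN, hjS, hjn⟩ := hjep
    have h1 : i.1 + 1 < N + 1 := by omega
    have hnv : (nxt i).1 = i.1 + 1 := nxt_val h1
    have hnvj : (nxt j).1 = j.1 + 1 := nxt_val hjN
    exact ⟨h1, ⟨j, hjS, hjv⟩, ⟨nxt j, hjn, by omega⟩⟩

def back {N : ℕ} (S : Finset (Fin (N + 1))) : Finset (Fin N) :=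
  Finset.univ.filter (fun j => Fin.castSucc j ∈ S)

lemma mem_back {N : ℕ} {S : Finset (Fin (N + 1))} {j : Fin N} :
    j ∈ back S ↔ Fin.castSucc j ∈ S := by simp [back]

lemma back_map {N : ℕ} (S' : Finset (Fin N)) : back (S'.map Fin.castSuccEmb) = S' := by
  ext j
  rw [mem_back, mem_map_iff]
  constructor
  · rintro ⟨j', hj', hv⟩
    have : j' = j := Fin.ext hv
    exact this ▸ hj'
  · intro hj
    exact ⟨j, hj, rfl⟩

lemma last_not_mem_map {N : ℕ} (S' : Finset (Fin N)) :
    Fin.last N ∉ S'.map Fin.castSuccEmb := by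
  rw [mem_map_iff]
  rintro ⟨j, -, hv⟩
  have := j.2
  rw [Fin.val_last] at hv
  omega

lemma map_back {N : ℕ} (S : Finset (Fin (N + 1))) (h : Fin.last N ∉ S) :
    (back S).map Fin.castSuccEmb = S := by
  ext i
  rw [mem_map_iff]
  constructor
  · rintro ⟨j, hj, hv⟩
    rw [mem_back] at hj
    have : Fin.castSucc j = i := Fin.ext hv
    exact this ▸ hj
  · intro hi
    have hlt : i.1 < N := by
      rcases Nat.lt_or_ge i.1 N with h' | h'
      · exact h'
      · exfalso
        have hi2 := i.2
        have : i = Fin.last N := Fin.ext (by rw [Fin.val_last]; omega)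
        exact h (this ▸ hi)
    refine ⟨⟨i.1, hlt⟩, ?_, rfl⟩
    rw [mem_back]
    have : Fin.castSucc (⟨i.1, hlt⟩ : Fin N) = i := Fin.ext rfl
    rw [this]; exact hi

lemma back_insert_last {N : ℕ} (S : Finset (Fin (N + 1))) :
    back (insert (Fin.last N) S) = back S := by
  ext j
  rw [mem_back, mem_back, Finset.mem_insert]
  constructor
  · rintro (h | h)
    · exfalso
      have := congrArg Fin.val h
      rw [Fin.coe_castSucc, Fin.val_last] at this
      have := j.2
      omega
    · exact h
  · exact Or.inr

lemma sum_notlast {N : ℕ} (f : Finset (Fin (N + 1)) → ℤ) :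
    ∑ S ∈ Finset.univ.filter (fun S => Fin.last N ∉ S), f S
      = ∑ S' : Finset (Fin N), f (S'.map Fin.castSuccEmb) := by
  refine Finset.sum_bij' (fun S _ => back S) (fun S' _ => S'.map Fin.castSuccEmb)
    (fun S hS => Finset.mem_univ _) (fun S' _ => ?_)
    (fun S hS => ?_) (fun S' _ => back_map S') (fun S hS => ?_)
  · exact Finset.mem_filter.mpr ⟨Finset.mem_univ _, last_not_mem_map S'⟩
  · show (back S).map Fin.castSuccEmb = S
    exact map_back S (Finset.mem_filter.mp hS).2
  · show f S = f ((back S).map Fin.castSuccEmb)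
    rw [map_back S (Finset.mem_filter.mp hS).2]

lemma back_map_erase {N : ℕ} (S : Finset (Fin (N + 1))) (hmem : Fin.last N ∈ S) :
    (back S).map Fin.castSuccEmb = S.erase (Fin.last N) := by
  have h1 : back S = back (S.erase (Fin.last N)) := by
    ext j
    rw [mem_back, mem_back, Finset.mem_erase]
    constructor
    · intro h
      refine ⟨?_, h⟩
      intro hh
      have := congrArg Fin.val hh
      rw [Fin.coe_castSucc, Fin.val_last] at this
      have := j.2
      omega
    · exact fun h => h.2
  rw [h1, map_back]
  simp

lemma sum_last {N : ℕ} (f : Finset (Fin (N + 1)) → ℤ) :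
    ∑ S ∈ Finset.univ.filter (fun S => Fin.last N ∈ S), f S
      = ∑ S' : Finset (Fin N), f (insert (Fin.last N) (S'.map Fin.castSuccEmb)) := by
  refine Finset.sum_bij' (fun S _ => back S)
    (fun S' _ => insert (Fin.last N) (S'.map Fin.castSuccEmb))
    (fun S hS => Finset.mem_univ _) (fun S' _ => ?_) (fun S hS => ?_)
    (fun S' _ => ?_) (fun S hS => ?_)
  · exact Finset.mem_filter.mpr ⟨Finset.mem_univ _, Finset.mem_insert_self _ _⟩
  · show insert (Fin.last N) ((back S).map Fin.castSuccEmb) = S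
    rw [back_map_erase S (Finset.mem_filter.mp hS).2,
      Finset.insert_erase (Finset.mem_filter.mp hS).2]
  · show back (insert (Fin.last N) (S'.map Fin.castSuccEmb)) = S'
    rw [back_insert_last, back_map]
  · show f S = f (insert (Fin.last N) ((back S).map Fin.castSuccEmb))
    rw [back_map_erase S (Finset.mem_filter.mp hS).2,
      Finset.insert_erase (Finset.mem_filter.mp hS).2]

lemma wt_map {N : ℕ} (S' : Finset (Fin N)) : wt (S'.map Fin.castSuccEmb) = wt S' := by
  rw [wt, wt, Finset.card_map, epos_map, Finset.card_map]

lemma epos_insert_last {M : ℕ} (S' : Finset (Fin (M + 1))) :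
    epos (insert (Fin.last (M + 1)) (S'.map Fin.castSuccEmb))
      = if Fin.last M ∈ S'
        then insert (Fin.castSucc (Fin.last M)) (epos (S'.map Fin.castSuccEmb))
        else epos (S'.map Fin.castSuccEmb) := by
  set T := S'.map Fin.castSuccEmb with hT
  set ll := Fin.last (M + 1) with hll
  set c := Fin.castSucc (Fin.last M) with hc
  have hcval : c.1 = M := rfl
  have hllval : ll.1 = M + 1 := rfl
  have hllT : ll ∉ T := last_not_mem_map S'
  have hcT : c ∈ T ↔ Fin.last M ∈ S' := by
    rw [hT, mem_map_iff]
    constructor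
    · rintro ⟨j, hj, hv⟩
      have : j = Fin.last M := Fin.ext (by rw [Fin.val_last]; omega)
      exact this ▸ hj
    · intro h
      exact ⟨Fin.last M, h, by rw [Fin.val_last]; omega⟩
  have hcnotepos : c ∉ epos T := by
    rw [mem_epos]
    rintro ⟨h1, -, hmem⟩
    have h2 : (nxt c).1 = M + 1 := by rw [nxt_val h1]; omega
    have : nxt c = ll := Fin.ext (by omega)
    rw [this] at hmem
    exact hllT hmem
  ext i
  rw [mem_epos]
  by_cases h1 : i.1 + 1 < M + 2
  · have hinotll : i ≠ ll := by
      intro hh; rw [hh] at h1; omega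
    have hnxtval : (nxt i).1 = i.1 + 1 := nxt_val h1
    by_cases hiM : i.1 = M
    · have hic : i = c := Fin.ext (by omega)
      have hnll : nxt i = ll := Fin.ext (by omega)
      constructor
      · rintro ⟨-, hi, -⟩
        have hiT : i ∈ T := (Finset.mem_insert.mp hi).resolve_left hinotll
        rw [if_pos (hcT.mp (hic ▸ hiT)), hic]
        exact Finset.mem_insert_self _ _
      · intro hmem
        by_cases hS : Fin.last M ∈ S'
        · exact ⟨h1, Finset.mem_insert_of_mem (hic ▸ hcT.mpr hS),
            by rw [hnll]; exact Finset.mem_insert_self _ _⟩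
        · rw [if_neg hS] at hmem
          exact absurd hmem (hic ▸ hcnotepos)
    · have hnxtnotll : nxt i ≠ ll := by
        intro hh
        have := congrArg Fin.val hh
        omega
      have hinotc : i ≠ c := by
        intro hh
        have := congrArg Fin.val hh
        omega
      constructor
      · rintro ⟨-, hi, hni⟩
        have hepos : i ∈ epos T := mem_epos.mpr ⟨h1,
          (Finset.mem_insert.mp hi).resolve_left hinotll,
          (Finset.mem_insert.mp hni).resolve_left hnxtnotll⟩
        split
        · exact Finset.mem_insert_of_mem hepos
        · exact hepos
      · intro hmem
        have hepos : i ∈ epos T := by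
          split at hmem
          · exact (Finset.mem_insert.mp hmem).resolve_left hinotc
          · exact hmem
        rw [mem_epos] at hepos
        exact ⟨h1, Finset.mem_insert_of_mem hepos.2.1, Finset.mem_insert_of_mem hepos.2.2⟩
  · constructor
    · rintro ⟨h, -⟩; omega
    · intro hmem
      have : i ∈ epos T := by
        split at hmem
        · rcases Finset.mem_insert.mp hmem with rfl | h
          · omega
          · exact h
        · exact hmem
      rw [mem_epos] at this
      omega

lemma wt_insert_last {M : ℕ} (S' : Finset (Fin (M + 1))) :
    wt (insert (Fin.last (M + 1)) (S'.map Fin.castSuccEmb))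
      = -(wt S' * (if Fin.last M ∈ S' then 2 else 1)) := by
  have hllT : Fin.last (M + 1) ∉ S'.map Fin.castSuccEmb := last_not_mem_map S'
  have hcnotepos : Fin.castSucc (Fin.last M) ∉ epos (S'.map Fin.castSuccEmb) := by
    rw [mem_epos]
    rintro ⟨h1, -, hmem⟩
    have h2 : (nxt (Fin.castSucc (Fin.last M))).1 = M + 1 := by
      rw [nxt_val h1]
      simp
    have : nxt (Fin.castSucc (Fin.last M)) = Fin.last (M + 1) := Fin.ext (by rw [h2]; rfl)
    rw [this] at hmem
    exact hllT hmem
  rw [wt, Finset.card_insert_of_notMem hllT, epos_insert_last]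
  split
  · rw [Finset.card_insert_of_notMem hcnotepos, Finset.card_map, epos_map, Finset.card_map, wt]
    ring
  · rw [Finset.card_map, epos_map, Finset.card_map, wt]
    ring

def TT (n : ℕ) : ℤ := ∑ S : Finset (Fin n), wt S

def TB (M : ℕ) : ℤ :=
  ∑ S ∈ Finset.univ.filter (fun S : Finset (Fin (M + 1)) => Fin.last M ∈ S), wt S

lemma TB_succ (M : ℕ) : TB (M + 1) = -(TT (M + 1) + TB M) := by
  rw [TB, sum_last]
  rw [Finset.sum_congr rfl (fun S' _ => wt_insert_last S')]
  rw [Finset.sum_neg_distrib]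
  congr 1
  rw [← Finset.sum_filter_add_sum_filter_not Finset.univ
    (fun S' : Finset (Fin (M + 1)) => Fin.last M ∈ S')
    (fun S' => wt S' * (if Fin.last M ∈ S' then 2 else 1))]
  have h1 : ∑ S' ∈ Finset.univ.filter (fun S' : Finset (Fin (M + 1)) => Fin.last M ∈ S'),
      wt S' * (if Fin.last M ∈ S' then 2 else 1) = 2 * TB M := by
    rw [TB, Finset.mul_sum]
    refine Finset.sum_congr rfl fun S hS => ?_
    rw [if_pos (Finset.mem_filter.mp hS).2]
    ring
  have h2 : ∑ S' ∈ Finset.univ.filter (fun S' : Finset (Fin (M + 1)) => ¬ Fin.last M ∈ S'),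
      wt S' * (if Fin.last M ∈ S' then 2 else 1)
      = ∑ S' ∈ Finset.univ.filter (fun S' : Finset (Fin (M + 1)) => ¬ Fin.last M ∈ S'), wt S' := by
    refine Finset.sum_congr rfl fun S hS => ?_
    rw [if_neg (Finset.mem_filter.mp hS).2]
    ring
  rw [h1, h2]
  have h3 : ∑ S' ∈ Finset.univ.filter (fun S' : Finset (Fin (M + 1)) => ¬ Fin.last M ∈ S'), wt S'
      = TT (M + 1) - TB M := by
    have h4 := Finset.sum_filter_add_sum_filter_not Finset.univ
      (fun S' : Finset (Fin (M + 1)) => Fin.last M ∈ S') wt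
    rw [TT, TB]
    linarith [h4]
  rw [h3]
  ring

lemma TT_succ (M : ℕ) : TT (M + 2) = TT (M + 1) + TB (M + 1) := by
  rw [TT, ← Finset.sum_filter_add_sum_filter_not Finset.univ
    (fun S : Finset (Fin (M + 2)) => Fin.last (M + 1) ∈ S) wt]
  rw [add_comm]
  congr 1
  rw [sum_notlast wt, Finset.sum_congr rfl (fun S' _ => wt_map S')]
  rfl

lemma fib_pair : ∀ M : ℕ, TT (M + 1) = (-1) ^ (M + 1) * (Nat.fib M : ℤ)
    ∧ TB M = (-1) ^ (M + 1) * (Nat.fib (M + 1) : ℤ) := by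
  intro M
  induction M with
  | zero =>
    constructor
    · show TT 1 = _
      norm_num
      decide
    · show TB 0 = _
      norm_num
      decide
  | succ M ih =>
    obtain ⟨h1, h2⟩ := ih
    have hTB : TB (M + 1) = (-1) ^ (M + 2) * (Nat.fib (M + 2) : ℤ) := by
      rw [TB_succ, h1, h2, Nat.fib_add_two]
      push_cast
      ring
    refine ⟨?_, hTB⟩
    rw [TT_succ, h1, hTB, Nat.fib_add_two (n := M)]
    push_cast
    ring

end PathAux

/-- **Boolean number of a path.**  For `n ≥ 1`, the path graph `P_n` (the unlabeled Coxeter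
graph of `A_n` and `B_n`) satisfies `β(P_n) = f(n-1)`, where `f` is the Fibonacci sequence. -/
theorem booleanNumber_pathGraph (n : ℕ) (hn : 1 ≤ n) :
    booleanNumber (pathG n) = (Nat.fib (n - 1) : ℤ) := by
  obtain ⟨M, rfl⟩ : ∃ M, n = M + 1 := ⟨n - 1, by omega⟩
  rw [PathAux.boolean_eq_sum, ← PathAux.TT, (PathAux.fib_pair M).1]
  rw [← mul_assoc, ← pow_add]
  rw [show (M + 1) + (M + 1) = 2 * (M + 1) by ring, pow_mul]
  norm_num
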